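/- Let f : 2^N → ℝ≥0 be a submodular function with multilinear extension F. Let x ∈ [0,1]^N satisfy x_u ≤ a for every u ∈ N, for some a ∈ [0,1]. Then for every set S ⊆ N, F(x ∨ 𝟙_S) ≥ (1 - a) · f(S), where x ∨ 𝟙_S is the coordinate-wise maximum of x and the characteristic vector of S. -/

import Mathlib

open MeasureTheory Finset

section Aux

variable {α : Type*} [Fintype α] [DecidableEq α]

/-- multilinear extension as an explicit sum -/
noncomputable def mlsum (f : Finset α → ℝ) (y : α → ℝ) : ℝ :=
  ∑ T : Finset α, f T * ((∏ v ∈ T, y v) * ∏ v ∈ Tᶜ, (1 - y v))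

/-- level set -/
noncomputable def lev (y : α → ℝ) (θ : ℝ) : Finset α :=
  univ.filter (fun v => θ < y v)

lemma int_lev (φ : Finset α → ℝ) (y : α → ℝ) (p q : ℝ) :
    IntervalIntegrable (fun θ => φ (lev y θ)) volume p q := by
  have hrw : (fun θ => φ (lev y θ))
      = ∑ T : Finset α, (fun θ : ℝ =>
          Set.indicator {θ' : ℝ | lev y θ' = T} (fun _ => φ T) θ) := by
    funext θ
    rw [Finset.sum_apply]
    rw [Finset.sum_eq_single (lev y θ)]
    · rw [Set.indicator_of_mem]
      exact rfl
    · intro T _ hT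
      apply Set.indicator_of_notMem
      intro h
      exact hT h.symm
    · intro h; exact absurd (Finset.mem_univ _) h
  rw [hrw]
  apply IntervalIntegrable.sum
  intro T _
  have hs : MeasurableSet {θ' : ℝ | lev y θ' = T} := by
    have hset : {θ' : ℝ | lev y θ' = T} = ⋂ v : α, {θ' : ℝ | θ' < y v ↔ v ∈ T} := by
      ext θ
      simp only [Set.mem_iInter, Set.mem_setOf_eq, lev, Finset.ext_iff, Finset.mem_filter,
        Finset.mem_univ, true_and]
    rw [hset]
    apply MeasurableSet.iInter
    intro v
    by_cases hv : v ∈ T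
    · simp only [hv, iff_true]
      exact measurableSet_Iio
    · simp only [hv, iff_false, not_lt]
      exact measurableSet_Ici
  rw [intervalIntegrable_iff]
  unfold IntegrableOn
  rw [integrable_indicator_iff hs]
  refine (integrableOn_const_iff (by simp)).mpr (Or.inr ?_)
  rw [Measure.restrict_apply hs]
  exact lt_of_le_of_lt (measure_mono Set.inter_subset_right) measure_Ioc_lt_top

lemma pivot (f : Finset α → ℝ) (y : α → ℝ) (u : α) :
    mlsum f y = (1 - y u) * mlsum f (Function.update y u 0)
      + y u * mlsum f (Function.update y u 1) := by
  unfold mlsum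
  rw [Finset.mul_sum, Finset.mul_sum, ← Finset.sum_add_distrib]
  apply Finset.sum_congr rfl
  intro T _
  have hco : ∀ (c : ℝ) (W : Finset α), u ∉ W →
      ∏ v ∈ W, (1 - Function.update y u c v) = ∏ v ∈ W, (1 - y v) := by
    intro c W hW
    apply Finset.prod_congr rfl
    intro v hv
    rw [Function.update_of_ne (by rintro rfl; exact hW hv)]
  have hpr : ∀ (c : ℝ) (W : Finset α), u ∉ W →
      ∏ v ∈ W, Function.update y u c v = ∏ v ∈ W, y v := by
    intro c W hW
    apply Finset.prod_congr rfl
    intro v hv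
    rw [Function.update_of_ne (by rintro rfl; exact hW hv)]
  by_cases hu : u ∈ T
  · have hu' : u ∉ Tᶜ := by simp [hu]
    have h1 : ∏ v ∈ T, y v = y u * ∏ v ∈ T.erase u, y v :=
      (Finset.mul_prod_erase T y hu).symm
    have h2 : ∏ v ∈ T, Function.update y u 0 v = 0 :=
      Finset.prod_eq_zero hu (by simp)
    have h3 : ∏ v ∈ T, Function.update y u 1 v = ∏ v ∈ T.erase u, y v := by
      rw [← Finset.mul_prod_erase T _ hu, Function.update_self, one_mul]
      apply Finset.prod_congr rfl
      intro v hv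
      rw [Function.update_of_ne (Finset.ne_of_mem_erase hv)]
    rw [h1, h2, h3, hco 0 Tᶜ hu', hco 1 Tᶜ hu']
    ring
  · have hu' : u ∈ Tᶜ := by simp [hu]
    have h1 : ∏ v ∈ Tᶜ, (1 - y v) = (1 - y u) * ∏ v ∈ Tᶜ.erase u, (1 - y v) :=
      (Finset.mul_prod_erase Tᶜ _ hu').symm
    have h2 : ∏ v ∈ Tᶜ, (1 - Function.update y u 0 v) = ∏ v ∈ Tᶜ.erase u, (1 - y v) := by
      rw [← Finset.mul_prod_erase Tᶜ _ hu', Function.update_self, sub_zero, one_mul]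
      apply Finset.prod_congr rfl
      intro v hv
      rw [Function.update_of_ne (Finset.ne_of_mem_erase hv)]
    have h3 : ∏ v ∈ Tᶜ, (1 - Function.update y u 1 v) = 0 := by
      apply Finset.prod_eq_zero hu'
      simp
    rw [h1, h2, h3, hpr 0 T hu, hpr 1 T hu]
    ring

/-- integrals agree if integrands agree off a single point -/
lemma integral_congr_single {G H : ℝ → ℝ} {p q t : ℝ}
    (h : ∀ θ ∈ Set.uIoc p q, θ ≠ t → G θ = H θ) :
    ∫ θ in p..q, G θ = ∫ θ in p..q, H θ := by
  apply intervalIntegral.integral_congr_ae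
  rw [MeasureTheory.ae_iff]
  refine measure_mono_null ?_ ((Real.volume_singleton : MeasureTheory.volume ({t}:Set ℝ) = 0))
  intro θ hθ
  simp only [Set.mem_setOf_eq, _root_.not_imp] at hθ
  by_contra hne
  exact hθ.2 (h θ hθ.1 (by simpa using hne))

lemma key (f : Finset α → ℝ)
    (hsub : ∀ A B : Finset α, f (A ∪ B) + f (A ∩ B) ≤ f A + f B) :
    ∀ (n : ℕ) (y : α → ℝ), (∀ v, y v ∈ Set.Icc (0:ℝ) 1) →
      (univ.filter (fun v => y v ≠ 0 ∧ y v ≠ 1)).card = n →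
      mlsum f y ≥ ∫ θ in (0:ℝ)..1, f (lev y θ) := by
  intro n
  induction n with
  | zero =>
    intro y hy hcard
    have hbool : ∀ v, y v = 0 ∨ y v = 1 := by
      intro v
      by_contra h
      push_neg at h
      have hmem : v ∈ univ.filter (fun v => y v ≠ 0 ∧ y v ≠ 1) := by
        simp [h.1, h.2]
      rw [Finset.card_eq_zero] at hcard
      simp [hcard] at hmem
    set R := univ.filter (fun v => y v = 1) with hR
    have hmemR : ∀ v, v ∈ R ↔ y v = 1 := by
      intro v; simp [hR]
    have hml : mlsum f y = f R := by
      unfold mlsum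
      rw [Finset.sum_eq_single R]
      · have p1 : ∏ v ∈ R, y v = 1 := by
          apply Finset.prod_eq_one
          intro v hv
          exact (hmemR v).mp hv
        have p2 : ∏ v ∈ Rᶜ, (1 - y v) = 1 := by
          apply Finset.prod_eq_one
          intro v hv
          have h1 : y v ≠ 1 := fun h => (Finset.mem_compl.mp hv) ((hmemR v).mpr h)
          rcases hbool v with h | h
          · rw [h]; ring
          · exact absurd h h1
        rw [p1, p2]; ring
      · intro T _ hT
        by_cases hTz : ∃ v ∈ T, y v = 0
        · obtain ⟨v, hv, hv0⟩ := hTz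
          rw [Finset.prod_eq_zero hv hv0]
          ring
        · push_neg at hTz
          have hTR : T ⊆ R := by
            intro v hv
            rcases hbool v with h | h
            · exact absurd h (hTz v hv)
            · exact (hmemR v).mpr h
          obtain ⟨v, hvR, hvT⟩ := Finset.not_subset.mp (fun h => hT (Finset.Subset.antisymm hTR h))
          have : (1 : ℝ) - y v = 0 := by rw [(hmemR v).mp hvR]; ring
          rw [Finset.prod_eq_zero (Finset.mem_compl.mpr hvT) this]
          ring
      · intro h; exact absurd (Finset.mem_univ _) h
    have hint : ∫ θ in (0:ℝ)..1, f (lev y θ) = f R := by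
      have : ∫ θ in (0:ℝ)..1, f (lev y θ) = ∫ _ in (0:ℝ)..1, f R := by
        apply integral_congr_single (t := 1)
        intro θ hθ hθ1
        rw [Set.uIoc_of_le (by norm_num : (0:ℝ) ≤ 1)] at hθ
        have h0 : 0 < θ := hθ.1
        have h1 : θ < 1 := lt_of_le_of_ne hθ.2 hθ1
        congr 1
        ext v
        simp only [lev, Finset.mem_filter, Finset.mem_univ, true_and, hmemR]
        constructor
        · intro hlt
          rcases hbool v with h | h
          · rw [h] at hlt; linarith
          · exact h
        · intro h; rw [h]; exact h1
      rw [this, intervalIntegral.integral_const]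
      norm_num
    rw [hml, hint]
  | succ n IH =>
    intro y hy hcard
    have hne : (univ.filter (fun v => y v ≠ 0 ∧ y v ≠ 1)).Nonempty := by
      rw [← Finset.card_pos, hcard]; exact Nat.succ_pos n
    obtain ⟨u, hu⟩ := hne
    rw [Finset.mem_filter] at hu
    have hu0 : y u ≠ 0 := hu.2.1
    have hu1 : y u ≠ 1 := hu.2.2
    have hc0 : 0 < y u := lt_of_le_of_ne (hy u).1 (Ne.symm hu0)
    have hc1 : y u < 1 := lt_of_le_of_ne (hy u).2 hu1
    set c := y u with hc
    set y0 := Function.update y u 0 with hy0def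
    set y1 := Function.update y u 1 with hy1def
    have hy0 : ∀ v, y0 v ∈ Set.Icc (0:ℝ) 1 := by
      intro v
      by_cases h : v = u
      · subst h; simp [hy0def]
      · simpa [hy0def, Function.update_of_ne h] using hy v
    have hy1 : ∀ v, y1 v ∈ Set.Icc (0:ℝ) 1 := by
      intro v
      by_cases h : v = u
      · subst h; simp [hy1def]
      · simpa [hy1def, Function.update_of_ne h] using hy v
    have hcard' : ∀ (z : α → ℝ) (czero : z = y0 ∨ z = y1),
        (univ.filter (fun v => z v ≠ 0 ∧ z v ≠ 1)).card = n := by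
      intro z hz
      have hfe : univ.filter (fun v => z v ≠ 0 ∧ z v ≠ 1)
          = (univ.filter (fun v => y v ≠ 0 ∧ y v ≠ 1)).erase u := by
        ext v
        rw [Finset.mem_erase, Finset.mem_filter, Finset.mem_filter]
        by_cases h : v = u
        · subst h
          rcases hz with hz | hz <;> simp [hz, hy0def, hy1def]
        · have hzv : z v = y v := by
            rcases hz with hz | hz <;> simp [hz, hy0def, hy1def, Function.update_of_ne h]
          simp [hzv, h]
      rw [hfe, Finset.card_erase_of_mem (by rw [Finset.mem_filter]; exact hu), hcard]
      omega
    have IH0 := IH y0 hy0 (hcard' y0 (Or.inl rfl))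
    have IH1 := IH y1 hy1 (hcard' y1 (Or.inr rfl))
    -- level set facts
    have hlev_agree : ∀ (θ : ℝ) (v : α), v ≠ u →
        ((v ∈ lev y θ ↔ v ∈ lev y0 θ) ∧ (v ∈ lev y1 θ ↔ v ∈ lev y0 θ)) := by
      intro θ v hv
      simp [lev, hy0def, hy1def, Function.update_of_ne hv]
    have hu_not : ∀ θ : ℝ, 0 ≤ θ → u ∉ lev y0 θ := by
      intro θ hθ
      simp [lev, hy0def, not_lt.mpr hθ]
    have hlev_lt : ∀ θ : ℝ, θ < c → lev y θ = insert u (lev y0 θ) := by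
      intro θ hθ
      ext v
      by_cases hv : v = u
      · subst hv
        simp [lev, hθ, ← hc]
      · rw [Finset.mem_insert]
        simp only [hv, false_or]
        exact (hlev_agree θ v hv).1
    have hlev_ge : ∀ θ : ℝ, c ≤ θ → lev y θ = lev y0 θ := by
      intro θ hθ
      ext v
      by_cases hv : v = u
      · subst hv
        have h1 : ¬ θ < y v := not_lt.mpr (by rw [← hc]; exact hθ)
        have h2 : v ∉ lev y0 θ := hu_not θ (le_trans hc0.le hθ)
        simp only [lev, Finset.mem_filter, Finset.mem_univ, true_and, h1, false_iff]
        intro hmem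
        exact h2 (by simpa [lev] using hmem)
      · exact (hlev_agree θ v hv).1
    have hlev1 : ∀ θ : ℝ, θ < 1 → lev y1 θ = insert u (lev y0 θ) := by
      intro θ hθ
      ext v
      by_cases hv : v = u
      · subst hv
        have : y1 v = 1 := by simp [hy1def]
        simp [lev, this, hθ]
      · rw [Finset.mem_insert]
        simp only [hv, false_or]
        exact (hlev_agree θ v hv).2
    -- integrands
    set g1 : ℝ → ℝ := fun θ => f (lev y0 θ) with hg1
    set g2 : ℝ → ℝ := fun θ => f (insert u (lev y0 θ)) with hg2
    have int1 : ∀ p q : ℝ, IntervalIntegrable g1 volume p q := fun p q => int_lev f y0 p q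
    have int2 : ∀ p q : ℝ, IntervalIntegrable g2 volume p q := fun p q =>
      int_lev (fun T => f (insert u T)) y0 p q
    set A := ∫ θ in (0:ℝ)..c, g1 θ with hA
    set B := ∫ θ in c..(1:ℝ), g1 θ with hB
    set A' := ∫ θ in (0:ℝ)..c, g2 θ with hA'
    set B' := ∫ θ in c..(1:ℝ), g2 θ with hB'
    have E1 : ∫ θ in (0:ℝ)..1, f (lev y1 θ) = A' + B' := by
      rw [hA', hB', intervalIntegral.integral_add_adjacent_intervals (int2 0 c) (int2 c 1)]
      apply integral_congr_single (t := 1)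
      intro θ hθ hθ1
      rw [Set.uIoc_of_le (by norm_num : (0:ℝ) ≤ 1)] at hθ
      rw [hlev1 θ (lt_of_le_of_ne hθ.2 hθ1)]
    have E2 : ∫ θ in (0:ℝ)..1, f (lev y θ) = A' + B := by
      rw [hA', hB]
      rw [← intervalIntegral.integral_add_adjacent_intervals (int_lev f y 0 c) (int_lev f y c 1)]
      congr 1
      · apply integral_congr_single (t := c)
        intro θ hθ hθc
        rw [Set.uIoc_of_le hc0.le] at hθ
        rw [hlev_lt θ (lt_of_le_of_ne hθ.2 hθc)]
      · apply integral_congr_single (t := c)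
        intro θ hθ _
        rw [Set.uIoc_of_le hc1.le] at hθ
        rw [hlev_ge θ hθ.1.le]
    have E5 : ∫ θ in (0:ℝ)..1, g1 θ = A + B := by
      rw [hA, hB, intervalIntegral.integral_add_adjacent_intervals (int1 0 c) (int1 c 1)]
    -- monotonicity of the marginal difference
    have hmono : ∀ θ1 θ2 : ℝ, 0 ≤ θ1 → θ1 ≤ θ2 → g1 θ2 - g2 θ2 ≤ g1 θ1 - g2 θ1 := by
      intro θ1 θ2 h0 h12
      have hsubset : lev y0 θ2 ⊆ lev y0 θ1 := by
        intro v hv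
        simp only [lev, Finset.mem_filter, Finset.mem_univ, true_and] at hv ⊢
        exact lt_of_le_of_lt h12 hv
      have huniv : insert u (lev y0 θ2) ∪ lev y0 θ1 = insert u (lev y0 θ1) := by
        rw [Finset.insert_union, Finset.union_eq_right.mpr hsubset]
      have hinter : insert u (lev y0 θ2) ∩ lev y0 θ1 = lev y0 θ2 := by
        rw [Finset.insert_inter_of_notMem (hu_not θ1 h0),
          Finset.inter_eq_left.mpr hsubset]
      have := hsub (insert u (lev y0 θ2)) (lev y0 θ1)
      rw [huniv, hinter] at this
      simp only [hg1, hg2]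
      linarith
    set D := g1 c - g2 c with hD
    have h1 : A - A' ≥ c * D := by
      have heq : A - A' = ∫ θ in (0:ℝ)..c, (g1 θ - g2 θ) :=
        (intervalIntegral.integral_sub (int1 0 c) (int2 0 c)).symm
      have hle : (∫ θ in (0:ℝ)..c, D) ≤ ∫ θ in (0:ℝ)..c, (g1 θ - g2 θ) := by
        apply intervalIntegral.integral_mono_on hc0.le intervalIntegrable_const
          ((int1 0 c).sub (int2 0 c))
        intro θ hθ
        exact hmono θ c hθ.1 hθ.2
      rw [intervalIntegral.integral_const] at hle
      rw [heq]
      calc c * D = (c - 0) • D := by rw [smul_eq_mul]; ring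
        _ ≤ _ := hle
    have h2 : B - B' ≤ (1 - c) * D := by
      have heq : B - B' = ∫ θ in c..(1:ℝ), (g1 θ - g2 θ) :=
        (intervalIntegral.integral_sub (int1 c 1) (int2 c 1)).symm
      have hle : (∫ θ in c..(1:ℝ), (g1 θ - g2 θ)) ≤ ∫ θ in c..(1:ℝ), D := by
        apply intervalIntegral.integral_mono_on hc1.le ((int1 c 1).sub (int2 c 1))
          intervalIntegrable_const
        intro θ hθ
        exact hmono c θ hc0.le hθ.1
      rw [intervalIntegral.integral_const] at hle
      rw [heq]
      calc (∫ θ in c..(1:ℝ), (g1 θ - g2 θ)) ≤ (1 - c) • D := hle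
        _ = (1 - c) * D := by rw [smul_eq_mul]
    -- combine
    rw [pivot f y u, E2]
    rw [E5] at IH0
    rw [E1] at IH1
    rw [← hy0def, ← hy1def, ← hc]
    have hml0 : (1 - c) * mlsum f y0 ≥ (1 - c) * (A + B) :=
      mul_le_mul_of_nonneg_left IH0 (by linarith)
    have hml1 : c * mlsum f y1 ≥ c * (A' + B') :=
      mul_le_mul_of_nonneg_left IH1 hc0.le
    have key2 : (1 - c) * (A - A') ≥ c * (B - B') := by
      have k1 : (1 - c) * (A - A') ≥ (1 - c) * (c * D) :=
        mul_le_mul_of_nonneg_left h1 (by linarith)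
      have k2 : c * (B - B') ≤ c * ((1 - c) * D) :=
        mul_le_mul_of_nonneg_left h2 hc0.le
      calc c * (B - B') ≤ c * ((1 - c) * D) := k2
        _ = (1 - c) * (c * D) := by ring
        _ ≤ (1 - c) * (A - A') := k1
    linarith

end Aux

/-- if `f` is non-negative submodular with multilinear extension `F`,
`x ∈ [0,1]^N` has all coordinates at most `a`, then for every `S ⊆ N`,
`F(x ∨ 𝟙_S) ≥ (1 - a) · f(S)`. -/
theorem stmt_3 {α : Type*} [Fintype α] [DecidableEq α]
    (f : Finset α → ℝ)
    (hnn : ∀ S : Finset α, 0 ≤ f S)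
    (hsub : ∀ A B : Finset α, f (A ∪ B) + f (A ∩ B) ≤ f A + f B)
    (F : (α → ℝ) → ℝ)
    (hF : ∀ y : α → ℝ,
      F y = ∑ T : Finset α, f T * ((∏ v ∈ T, y v) * ∏ v ∈ Tᶜ, (1 - y v)))
    (a : ℝ) (ha : a ∈ Set.Icc (0:ℝ) 1)
    (x : α → ℝ) (hx : ∀ v, x v ∈ Set.Icc (0:ℝ) 1) (hxa : ∀ v, x v ≤ a)
    (S : Finset α) :
    F (fun v => max (x v) (if v ∈ S then 1 else 0)) ≥ (1 - a) * f S := by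
  set y : α → ℝ := fun v => max (x v) (if v ∈ S then 1 else 0) with hydef
  have hFy : F y = mlsum f y := hF y
  have hy : ∀ v, y v ∈ Set.Icc (0:ℝ) 1 := by
    intro v
    constructor
    · exact le_trans (hx v).1 (le_max_left _ _)
    · apply max_le (hx v).2
      split <;> norm_num
  have hkey := key f hsub (Finset.univ.filter (fun v => y v ≠ 0 ∧ y v ≠ 1)).card y hy rfl
  have hsplit : ∫ θ in (0:ℝ)..1, f (lev y θ)
      = (∫ θ in (0:ℝ)..a, f (lev y θ)) + ∫ θ in a..(1:ℝ), f (lev y θ) :=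
    (intervalIntegral.integral_add_adjacent_intervals (int_lev f y 0 a) (int_lev f y a 1)).symm
  have hpos : (0:ℝ) ≤ ∫ θ in (0:ℝ)..a, f (lev y θ) :=
    intervalIntegral.integral_nonneg ha.1 (fun θ _ => hnn _)
  have htail : ∫ θ in a..(1:ℝ), f (lev y θ) = (1 - a) * f S := by
    have hcongr : ∫ θ in a..(1:ℝ), f (lev y θ) = ∫ _ in a..(1:ℝ), f S := by
      apply integral_congr_single (t := 1)
      intro θ hθ hθ1
      rw [Set.uIoc_of_le ha.2] at hθ
      have hθa : a < θ := hθ.1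
      have hθ1' : θ < 1 := lt_of_le_of_ne hθ.2 hθ1
      congr 1
      ext v
      simp only [lev, Finset.mem_filter, Finset.mem_univ, true_and]
      by_cases hv : v ∈ S
      · have : y v = 1 := by
          simp only [hydef, hv, if_true]
          exact max_eq_right (hx v).2
        rw [this]
        simp [hv, hθ1']
      · have : y v = x v := by
          simp only [hydef, hv, if_false]
          exact max_eq_left (hx v).1
        rw [this]
        have : ¬ θ < x v := not_lt.mpr (le_trans (hxa v) hθa.le)
        simp [hv, this]
    rw [hcongr, intervalIntegral.integral_const, smul_eq_mul]
  rw [hFy]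
  calc (1 - a) * f S = 0 + (1 - a) * f S := by ring
    _ ≤ (∫ θ in (0:ℝ)..a, f (lev y θ)) + ∫ θ in a..(1:ℝ), f (lev y θ) := by
        rw [htail]
        exact add_le_add_left hpos _
    _ = ∫ θ in (0:ℝ)..1, f (lev y θ) := hsplit.symm
    _ ≤ mlsum f y := hkey
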